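/- Let d₁, d₂, d₃ ∈ ℕ and let A = 𝒜^{[3]}(ℝ^{(d₁,d₂,d₃)}) be the free graded Weil algebra of order 3 with d₁ generators of weight 1, d₂ generators of weight 2 and d₃ generators of weight 3, i.e. the quotient of the real polynomial algebra in these variables by the ideal I₃ generated by all weighted-homogeneous polynomials of weighted degree > 3, with graded components A_i. Then the image of the multiplication map A₁ ⊗[ℝ] A₂ → A₃ has ℝ-dimension binomial(d₁,3) + 2·binomial(d₁,2) + d₁ + d₁·d₂, which equals binomial(d₁+2,3) + d₁·d₂. -/

import Mathlib

open MvPolynomial TensorProduct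


/-- Weights for `d₁` variables of weight 1, `d₂` of weight 2 and `d₃` of weight 3. -/
def wt123 (d₁ d₂ d₃ : ℕ) : Fin (d₁ + d₂ + d₃) → ℕ := fun j =>
  if (j : ℕ) < d₁ then 1 else if (j : ℕ) < d₁ + d₂ then 2 else 3

/-- The ideal `I_k` of `ℝ[x₁,…,xₙ]` generated by all `w`-weighted-homogeneous
polynomials of weighted degree `> k`. -/
noncomputable def weightIdeal (n k : ℕ) (w : Fin n → ℕ) : Ideal (MvPolynomial (Fin n) ℝ) :=
  Ideal.span {P : MvPolynomial (Fin n) ℝ | ∃ i : ℕ, k < i ∧ P.IsWeightedHomogeneous w i}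

/-- The degree-`i` component of the free graded Weil algebra of order 3,
`𝒜^{[3]}(ℝ^{(d₁,d₂,d₃)}) = ℝ[x]/I₃`: the image of the submodule of weighted-homogeneous
polynomials of weighted degree `i`. -/
noncomputable def freeWeil3Component (d₁ d₂ d₃ i : ℕ) :
    Submodule ℝ (MvPolynomial (Fin (d₁ + d₂ + d₃)) ℝ ⧸
      weightIdeal (d₁ + d₂ + d₃) 3 (wt123 d₁ d₂ d₃)) :=
  Submodule.map
    (Ideal.Quotient.mkₐ ℝ (weightIdeal (d₁ + d₂ + d₃) 3 (wt123 d₁ d₂ d₃))).toLinearMap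
    (weightedHomogeneousSubmodule ℝ (wt123 d₁ d₂ d₃) i)



section WeightLemmas

variable {σ : Type*}

lemma weight_single_nat (w : σ → ℕ) (j : σ) (c : ℕ) :
    Finsupp.weight w (Finsupp.single j c) = c * w j := by
  simp [Finsupp.weight_apply, Finsupp.sum_single_index, smul_eq_mul]

lemma weight_eq_zero_nat {w : σ → ℕ} (hw : ∀ j, 1 ≤ w j) {μ : σ →₀ ℕ}
    (h : Finsupp.weight w μ = 0) : μ = 0 := by
  have : Finsupp.NonTorsionWeight ℕ w :=
    Finsupp.nonTorsionWeight_of (R := ℕ) (w := w) (fun i => by have := hw i; omega)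
  exact (Finsupp.weight_eq_zero_iff_eq_zero w).mp h

lemma weight_peel {w : σ → ℕ} (hw : ∀ j, 1 ≤ w j) {μ : σ →₀ ℕ}
    (h : Finsupp.weight w μ ≠ 0) :
    ∃ j μ', μ = Finsupp.single j 1 + μ' ∧
      Finsupp.weight w μ = w j + Finsupp.weight w μ' := by
  have hμ : μ ≠ 0 := by rintro rfl; simp at h
  obtain ⟨j, hj⟩ : ∃ j, μ j ≠ 0 := by
    by_contra hc
    push_neg at hc
    exact hμ (Finsupp.ext fun a => hc a)
  refine ⟨j, μ - Finsupp.single j 1, ?_, ?_⟩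
  · ext k
    simp only [Finsupp.add_apply, Finsupp.tsub_apply, Finsupp.single_apply]
    by_cases hk : j = k
    · subst hk; simp only [Finsupp.single_eq_same]; omega
    · simp [hk]
  · have : μ = Finsupp.single j 1 + (μ - Finsupp.single j 1) := by
      ext k
      simp only [Finsupp.add_apply, Finsupp.tsub_apply, Finsupp.single_apply]
      by_cases hk : j = k
      · subst hk; simp only [Finsupp.single_eq_same]; omega
      · simp [hk]
    conv_lhs => rw [this]
    rw [map_add, weight_single_nat, one_mul]

lemma weight_eq_one_nat {w : σ → ℕ} (hw : ∀ j, 1 ≤ w j) {μ : σ →₀ ℕ}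
    (h : Finsupp.weight w μ = 1) :
    ∃ j, w j = 1 ∧ μ = Finsupp.single j 1 := by
  obtain ⟨j, μ', h1, h2⟩ := weight_peel hw (by omega : Finsupp.weight w μ ≠ 0)
  have hj := hw j
  have hz : Finsupp.weight w μ' = 0 := by omega
  have : μ' = 0 := weight_eq_zero_nat hw hz
  subst this
  exact ⟨j, by omega, by simpa using h1⟩

lemma weight_eq_two_nat {w : σ → ℕ} (hw : ∀ j, 1 ≤ w j) {μ : σ →₀ ℕ}
    (h : Finsupp.weight w μ = 2) :
    (∃ j, w j = 2 ∧ μ = Finsupp.single j 1) ∨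
    (∃ i j, w i = 1 ∧ w j = 1 ∧ μ = Finsupp.single i 1 + Finsupp.single j 1) := by
  obtain ⟨j, μ', h1, h2⟩ := weight_peel hw (by omega : Finsupp.weight w μ ≠ 0)
  have hj := hw j
  rcases Nat.lt_or_ge (Finsupp.weight w μ') 1 with hz | ho
  · have : μ' = 0 := weight_eq_zero_nat hw (by omega)
    subst this
    exact Or.inl ⟨j, by omega, by simpa using h1⟩
  · have h1' : Finsupp.weight w μ' = 1 := by omega
    obtain ⟨i, hi, rfl⟩ := weight_eq_one_nat hw h1'
    exact Or.inr ⟨j, i, by omega, hi, h1⟩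

end WeightLemmas

section Wt
variable (d₁ d₂ d₃ : ℕ)

lemma wt123_pos : ∀ j, 1 ≤ wt123 d₁ d₂ d₃ j := by
  intro j; unfold wt123; split_ifs <;> omega

lemma wt123_eq_one {j : Fin (d₁ + d₂ + d₃)} : wt123 d₁ d₂ d₃ j = 1 ↔ (j : ℕ) < d₁ := by
  unfold wt123; split_ifs <;> omega

lemma wt123_eq_two {j : Fin (d₁ + d₂ + d₃)} :
    wt123 d₁ d₂ d₃ j = 2 ↔ d₁ ≤ (j : ℕ) ∧ (j : ℕ) < d₁ + d₂ := by
  unfold wt123; split_ifs <;> omega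

/-- The ideal of polynomials all of whose monomials have weighted degree `> 3`. -/
noncomputable def highIdeal : Ideal (MvPolynomial (Fin (d₁ + d₂ + d₃)) ℝ) where
  carrier := {p | ∀ μ ∈ p.support, 3 < Finsupp.weight (wt123 d₁ d₂ d₃) μ}
  add_mem' := by
    intro p q hp hq μ hμ
    have := MvPolynomial.support_add (p := p) (q := q) hμ
    rw [Finset.mem_union] at this
    rcases this with h | h
    · exact hp μ h
    · exact hq μ h
  zero_mem' := by simp
  smul_mem' := by
    intro c p hp μ hμ
    rw [smul_eq_mul] at hμ
    have := MvPolynomial.support_mul c p hμ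
    rw [Finset.mem_add] at this
    obtain ⟨a, ha, b, hb, rfl⟩ := this
    have := hp b hb
    rw [map_add]
    omega

lemma weightIdeal_le :
    weightIdeal (d₁ + d₂ + d₃) 3 (wt123 d₁ d₂ d₃) ≤ highIdeal d₁ d₂ d₃ := by
  rw [weightIdeal, Ideal.span_le]
  rintro P ⟨i, hi, hP⟩ μ hμ
  rw [MvPolynomial.mem_support_iff] at hμ
  have := hP hμ
  omega

lemma eq_zero_of_WH3_mem {p : MvPolynomial (Fin (d₁ + d₂ + d₃)) ℝ}
    (hp : p.IsWeightedHomogeneous (wt123 d₁ d₂ d₃) 3)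
    (h : p ∈ weightIdeal (d₁ + d₂ + d₃) 3 (wt123 d₁ d₂ d₃)) : p = 0 := by
  have h' := weightIdeal_le d₁ d₂ d₃ h
  rw [← MvPolynomial.support_eq_empty, Finset.eq_empty_iff_forall_notMem]
  intro μ hμ
  have h1 := h' μ hμ
  rw [MvPolynomial.mem_support_iff] at hμ
  have h2 := hp hμ
  omega

end Wt


section Idx
variable (d₁ d₂ d₃ : ℕ)

/-- Embedding of weight-1 variables. -/
def emb1 (i : Fin d₁) : Fin (d₁ + d₂ + d₃) := ⟨(i : ℕ), by omega⟩

/-- Embedding of weight-2 variables. -/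
def emb2 (a : Fin d₂) : Fin (d₁ + d₂ + d₃) := ⟨d₁ + (a : ℕ), by omega⟩

lemma emb1_inj : Function.Injective (emb1 d₁ d₂ d₃) := by
  intro i j h
  simpa [emb1, Fin.ext_iff] using h

lemma emb1_ne_emb2 (i : Fin d₁) (a : Fin d₂) : emb1 d₁ d₂ d₃ i ≠ emb2 d₁ d₂ d₃ a := by
  simp only [emb1, emb2, Fin.ext_iff, ne_eq]
  omega

/-- Index type for the basis of `A₁ · A₂`. -/
def idxType := Sym (Fin d₁) 3 ⊕ Fin d₁ × Fin d₂

/-- Exponent vectors for the monomial basis of `A₁ · A₂`. -/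
noncomputable def eexp : Sym (Fin d₁) 3 ⊕ Fin d₁ × Fin d₂ → (Fin (d₁ + d₂ + d₃) →₀ ℕ)
  | .inl s => Multiset.toFinsupp (Multiset.map (emb1 d₁ d₂ d₃) (s : Multiset (Fin d₁)))
  | .inr (i, a) => Finsupp.single (emb1 d₁ d₂ d₃ i) 1 + Finsupp.single (emb2 d₁ d₂ d₃ a) 1

lemma eexp_inl_apply_emb2 (s : Sym (Fin d₁) 3) (a : Fin d₂) :
    eexp d₁ d₂ d₃ (.inl s) (emb2 d₁ d₂ d₃ a) = 0 := by
  simp only [eexp, Multiset.toFinsupp_apply, Multiset.count_eq_zero, Multiset.mem_map]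
  rintro ⟨i, -, h⟩
  exact emb1_ne_emb2 d₁ d₂ d₃ i a h

lemma eexp_inr_apply_emb2 (i : Fin d₁) (a b : Fin d₂) :
    eexp d₁ d₂ d₃ (.inr (i, a)) (emb2 d₁ d₂ d₃ b) = if a = b then 1 else 0 := by
  simp only [eexp, Finsupp.add_apply, Finsupp.single_apply]
  rw [if_neg (emb1_ne_emb2 d₁ d₂ d₃ i b)]
  have : emb2 d₁ d₂ d₃ a = emb2 d₁ d₂ d₃ b ↔ a = b := by
    simp only [emb2, Fin.mk.injEq, Fin.ext_iff]; omega
  simp [this]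

lemma eexp_inj : Function.Injective (eexp d₁ d₂ d₃) := by
  rintro (s | ⟨i, a⟩) (t | ⟨j, b⟩) h
  · simp only [eexp] at h
    have := Multiset.toFinsupp.injective h
    have := Multiset.map_injective (emb1_inj d₁ d₂ d₃) this
    exact congrArg Sum.inl (Subtype.ext this)
  · exfalso
    have h1 := DFunLike.congr_fun h (emb2 d₁ d₂ d₃ b)
    rw [show (eexp d₁ d₂ d₃ (.inl s)) (emb2 d₁ d₂ d₃ b) = 0 from eexp_inl_apply_emb2 d₁ d₂ d₃ s b] at h1
    rw [show (eexp d₁ d₂ d₃ (.inr (j, b))) (emb2 d₁ d₂ d₃ b) = 1 by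
      rw [eexp_inr_apply_emb2]; simp] at h1
    exact one_ne_zero h1.symm
  · exfalso
    have h1 := DFunLike.congr_fun h (emb2 d₁ d₂ d₃ a)
    rw [show (eexp d₁ d₂ d₃ (.inl t)) (emb2 d₁ d₂ d₃ a) = 0 from eexp_inl_apply_emb2 d₁ d₂ d₃ t a] at h1
    rw [show (eexp d₁ d₂ d₃ (.inr (i, a))) (emb2 d₁ d₂ d₃ a) = 1 by
      rw [eexp_inr_apply_emb2]; simp] at h1
    exact one_ne_zero h1
  · have hab : a = b := by
      have h1 := DFunLike.congr_fun h (emb2 d₁ d₂ d₃ b)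
      rw [eexp_inr_apply_emb2, eexp_inr_apply_emb2] at h1
      simp only [if_pos rfl] at h1
      by_contra hne
      rw [if_neg hne] at h1
      exact one_ne_zero h1.symm
    subst hab
    have hij : i = j := by
      simp only [eexp, add_left_inj] at h
      have := Finsupp.single_left_injective (one_ne_zero) h
      exact emb1_inj d₁ d₂ d₃ this
    rw [hij]

end Idx


section Fam
variable (d₁ d₂ d₃ : ℕ)

/-- The set of products `p * q` with `p` homogeneous of weight 1 and `q` of weight 2. -/
def prodSet : Set (MvPolynomial (Fin (d₁ + d₂ + d₃)) ℝ) :=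
  {x | ∃ p ∈ weightedHomogeneousSubmodule ℝ (wt123 d₁ d₂ d₃) 1,
       ∃ q ∈ weightedHomogeneousSubmodule ℝ (wt123 d₁ d₂ d₃) 2, p * q = x}

/-- The monomial family spanning the products. -/
noncomputable def vfam (i : Sym (Fin d₁) 3 ⊕ Fin d₁ × Fin d₂) :
    MvPolynomial (Fin (d₁ + d₂ + d₃)) ℝ :=
  monomial (eexp d₁ d₂ d₃ i) 1

lemma vfam_linearIndependent : LinearIndependent ℝ (vfam d₁ d₂ d₃) := by
  have : vfam d₁ d₂ d₃ = (basisMonomials (Fin (d₁ + d₂ + d₃)) ℝ) ∘ eexp d₁ d₂ d₃ := by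
    funext i
    simp [vfam, coe_basisMonomials]
  rw [this]
  exact (basisMonomials _ _).linearIndependent.comp _ (eexp_inj d₁ d₂ d₃)

lemma weight_single_emb1 (i : Fin d₁) :
    Finsupp.weight (wt123 d₁ d₂ d₃) (Finsupp.single (emb1 d₁ d₂ d₃ i) 1) = 1 := by
  rw [weight_single_nat, one_mul, wt123_eq_one]
  exact i.2

lemma weight_single_emb2 (a : Fin d₂) :
    Finsupp.weight (wt123 d₁ d₂ d₃) (Finsupp.single (emb2 d₁ d₂ d₃ a) 1) = 2 := by
  rw [weight_single_nat, one_mul, wt123_eq_two]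
  constructor
  · simp [emb2]
  · simp only [emb2]
    omega


lemma eexp_inl_def (s : Sym (Fin d₁) 3) :
    eexp d₁ d₂ d₃ (.inl s)
      = Multiset.toFinsupp (Multiset.map (emb1 d₁ d₂ d₃) (s : Multiset (Fin d₁))) := rfl

lemma eexp_inr_def (i : Fin d₁) (a : Fin d₂) :
    eexp d₁ d₂ d₃ (.inr (i, a))
      = Finsupp.single (emb1 d₁ d₂ d₃ i) 1 + Finsupp.single (emb2 d₁ d₂ d₃ a) 1 := rfl

lemma toFinsupp_triple {α : Type*} [DecidableEq α] (x y z : α) :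
    Multiset.toFinsupp ({x, y, z} : Multiset α)
      = Finsupp.single x 1 + Finsupp.single y 1 + Finsupp.single z 1 := by
  simp only [Multiset.insert_eq_cons, ← Multiset.singleton_add, Multiset.toFinsupp_add,
    Multiset.toFinsupp_singleton]
  abel

lemma eexp_inl_triple (x y z : Fin d₁) (h : Multiset.card {x, y, z} = 3) :
    eexp d₁ d₂ d₃ (.inl ⟨{x, y, z}, h⟩)
      = Finsupp.single (emb1 d₁ d₂ d₃ x) 1 + Finsupp.single (emb1 d₁ d₂ d₃ y) 1
        + Finsupp.single (emb1 d₁ d₂ d₃ z) 1 := by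
  show Multiset.toFinsupp (Multiset.map (emb1 d₁ d₂ d₃) {x, y, z}) = _
  simp only [Multiset.insert_eq_cons, Multiset.map_cons, Multiset.map_singleton]
  rw [show ((emb1 d₁ d₂ d₃ x) ::ₘ (emb1 d₁ d₂ d₃ y) ::ₘ {emb1 d₁ d₂ d₃ z} : Multiset _)
      = {emb1 d₁ d₂ d₃ x, emb1 d₁ d₂ d₃ y, emb1 d₁ d₂ d₃ z} from rfl]
  exact toFinsupp_triple _ _ _

lemma vfam_mem_prodSet (i : Sym (Fin d₁) 3 ⊕ Fin d₁ × Fin d₂) :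
    vfam d₁ d₂ d₃ i ∈ prodSet d₁ d₂ d₃ := by
  rcases i with s | ⟨i, a⟩
  · obtain ⟨x, y, z, hs⟩ := Multiset.card_eq_three.mp s.2
    refine ⟨monomial (Finsupp.single (emb1 d₁ d₂ d₃ x) 1) 1, ?_,
      monomial (Finsupp.single (emb1 d₁ d₂ d₃ y) 1 + Finsupp.single (emb1 d₁ d₂ d₃ z) 1) 1, ?_, ?_⟩
    · exact isWeightedHomogeneous_monomial _ _ _ (weight_single_emb1 d₁ d₂ d₃ x)
    · refine isWeightedHomogeneous_monomial _ _ _ ?_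
      rw [map_add, weight_single_emb1, weight_single_emb1]
    · rw [monomial_mul, one_mul]
      unfold vfam
      have hs' : s = ⟨{x, y, z}, hs ▸ s.2⟩ := Subtype.ext hs
      rw [hs', eexp_inl_triple]
      congr 1
      abel
  · refine ⟨monomial (Finsupp.single (emb1 d₁ d₂ d₃ i) 1) 1, ?_,
      monomial (Finsupp.single (emb2 d₁ d₂ d₃ a) 1) 1, ?_, ?_⟩
    · exact isWeightedHomogeneous_monomial _ _ _ (weight_single_emb1 d₁ d₂ d₃ i)
    · exact isWeightedHomogeneous_monomial _ _ _ (weight_single_emb2 d₁ d₂ d₃ a)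
    · rw [monomial_mul, one_mul]
      rfl


lemma sum_single_mem_range_eexp {μ ν : Fin (d₁ + d₂ + d₃) →₀ ℕ}
    (hμ : Finsupp.weight (wt123 d₁ d₂ d₃) μ = 1)
    (hν : Finsupp.weight (wt123 d₁ d₂ d₃) ν = 2) :
    ∃ i, eexp d₁ d₂ d₃ i = μ + ν := by
  obtain ⟨j, hj, rfl⟩ := weight_eq_one_nat (wt123_pos d₁ d₂ d₃) hμ
  rw [wt123_eq_one] at hj
  rcases weight_eq_two_nat (wt123_pos d₁ d₂ d₃) hν with ⟨k, hk, rfl⟩ | ⟨k, l, hk, hl, rfl⟩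
  · rw [wt123_eq_two] at hk
    refine ⟨.inr (⟨(j : ℕ), hj⟩, ⟨(k : ℕ) - d₁, by omega⟩), ?_⟩
    have h1 : emb1 d₁ d₂ d₃ ⟨(j : ℕ), hj⟩ = j := Fin.ext rfl
    have h2 : emb2 d₁ d₂ d₃ ⟨(k : ℕ) - d₁, by omega⟩ = k := by
      apply Fin.ext
      show d₁ + ((k : ℕ) - d₁) = (k : ℕ)
      omega
    rw [eexp_inr_def, h1, h2]
  · rw [wt123_eq_one] at hk hl
    refine ⟨.inl ⟨{⟨(j : ℕ), hj⟩, ⟨(k : ℕ), hk⟩, ⟨(l : ℕ), hl⟩}, by simp⟩, ?_⟩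
    have e1 : emb1 d₁ d₂ d₃ ⟨(j : ℕ), hj⟩ = j := Fin.ext rfl
    have e2 : emb1 d₁ d₂ d₃ ⟨(k : ℕ), hk⟩ = k := Fin.ext rfl
    have e3 : emb1 d₁ d₂ d₃ ⟨(l : ℕ), hl⟩ = l := Fin.ext rfl
    rw [eexp_inl_triple, e1, e2, e3]
    abel

lemma span_prodSet_eq :
    Submodule.span ℝ (prodSet d₁ d₂ d₃) = Submodule.span ℝ (Set.range (vfam d₁ d₂ d₃)) := by
  apply le_antisymm
  · rw [Submodule.span_le]
    rintro x ⟨p, hp, q, hq, rfl⟩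
    rw [mem_weightedHomogeneousSubmodule] at hp hq
    rw [p.as_sum, Finset.sum_mul]
    refine Submodule.sum_mem _ fun μ hμ => ?_
    rw [q.as_sum, Finset.mul_sum]
    refine Submodule.sum_mem _ fun ν hν => ?_
    rw [MvPolynomial.mem_support_iff] at hμ hν
    have hwμ := hp hμ
    have hwν := hq hν
    rw [monomial_mul]
    rw [show (monomial (μ + ν)) (coeff μ p * coeff ν q)
        = (coeff μ p * coeff ν q) • (monomial (μ + ν)) (1 : ℝ) by
      rw [smul_monomial, smul_eq_mul, mul_one]]
    refine Submodule.smul_mem _ _ (Submodule.subset_span ?_)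
    obtain ⟨i, hi⟩ := sum_single_mem_range_eexp d₁ d₂ d₃ hwμ hwν
    exact ⟨i, by rw [vfam, hi]⟩
  · rw [Submodule.span_le]
    rintro x ⟨i, rfl⟩
    exact Submodule.subset_span (vfam_mem_prodSet d₁ d₂ d₃ i)

lemma span_prodSet_le_WH3 :
    Submodule.span ℝ (prodSet d₁ d₂ d₃)
      ≤ weightedHomogeneousSubmodule ℝ (wt123 d₁ d₂ d₃) 3 := by
  rw [Submodule.span_le]
  rintro x ⟨p, hp, q, hq, rfl⟩
  rw [mem_weightedHomogeneousSubmodule] at hp hq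
  simp only [SetLike.mem_coe, mem_weightedHomogeneousSubmodule]
  exact (by norm_num : (3:ℕ) = 1 + 2) ▸ hp.mul hq

end Fam


lemma choose_arith (d : ℕ) :
    Nat.choose d 3 + 2 * Nat.choose d 2 + d = Nat.choose (d + 2) 3 := by
  have h1 : (d + 2).choose 3 = (d + 1).choose 2 + (d + 1).choose 3 :=
    Nat.choose_succ_succ (d + 1) 2
  have h2 : (d + 1).choose 2 = d.choose 1 + d.choose 2 := Nat.choose_succ_succ d 1
  have h3 : (d + 1).choose 3 = d.choose 2 + d.choose 3 := Nat.choose_succ_succ d 2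
  rw [Nat.choose_one_right] at h2
  omega

section Main
variable (d₁ d₂ d₃ : ℕ)

/-- The quotient map as a linear map. -/
noncomputable def mkL : MvPolynomial (Fin (d₁ + d₂ + d₃)) ℝ →ₗ[ℝ]
    MvPolynomial (Fin (d₁ + d₂ + d₃)) ℝ ⧸ weightIdeal (d₁ + d₂ + d₃) 3 (wt123 d₁ d₂ d₃) :=
  (Ideal.Quotient.mkₐ ℝ (weightIdeal (d₁ + d₂ + d₃) 3 (wt123 d₁ d₂ d₃))).toLinearMap

lemma freeWeil3Component_eq (i : ℕ) :
    freeWeil3Component d₁ d₂ d₃ i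
      = Submodule.map (mkL d₁ d₂ d₃) (weightedHomogeneousSubmodule ℝ (wt123 d₁ d₂ d₃) i) := rfl

lemma mkL_mul (p q : MvPolynomial (Fin (d₁ + d₂ + d₃)) ℝ) :
    mkL d₁ d₂ d₃ (p * q) = mkL d₁ d₂ d₃ p * mkL d₁ d₂ d₃ q := by
  simp only [_root_.mkL, AlgHom.toLinearMap_apply, map_mul]

lemma mkL_injOn : Function.Injective
    ((mkL d₁ d₂ d₃) ∘ₗ (Submodule.span ℝ (prodSet d₁ d₂ d₃)).subtype) := by
  rw [← LinearMap.ker_eq_bot, LinearMap.ker_eq_bot']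
  rintro ⟨x, hx⟩ hfx
  simp only [LinearMap.coe_comp, Function.comp_apply, Submodule.coe_subtype, _root_.mkL,
    AlgHom.toLinearMap_apply, Ideal.Quotient.mkₐ_eq_mk] at hfx
  rw [Ideal.Quotient.eq_zero_iff_mem] at hfx
  have hx0 := hfx
  have hxWH : x.IsWeightedHomogeneous (wt123 d₁ d₂ d₃) 3 := by
    have := span_prodSet_le_WH3 d₁ d₂ d₃ hx
    rwa [mem_weightedHomogeneousSubmodule] at this
  exact Subtype.ext (eq_zero_of_WH3_mem d₁ d₂ d₃ hxWH hx0)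

lemma finrank_span_prodSet :
    Module.finrank ℝ (Submodule.span ℝ (prodSet d₁ d₂ d₃))
      = Nat.choose (d₁ + 2) 3 + d₁ * d₂ := by
  rw [span_prodSet_eq, finrank_span_eq_card (vfam_linearIndependent d₁ d₂ d₃)]
  rw [Fintype.card_sum, Fintype.card_prod, Fintype.card_fin, Fintype.card_fin,
    Sym.card_sym_eq_choose, Fintype.card_fin]
  have : d₁ + 3 - 1 = d₁ + 2 := by omega
  rw [this]

end Main

theorem stmt_12 (d₁ d₂ d₃ : ℕ)
    (m : (freeWeil3Component d₁ d₂ d₃ 1) ⊗[ℝ] (freeWeil3Component d₁ d₂ d₃ 2) →ₗ[ℝ]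
      (freeWeil3Component d₁ d₂ d₃ 3))
    (hm : ∀ (a : freeWeil3Component d₁ d₂ d₃ 1) (b : freeWeil3Component d₁ d₂ d₃ 2),
      (m (a ⊗ₜ[ℝ] b) : MvPolynomial (Fin (d₁ + d₂ + d₃)) ℝ ⧸
          weightIdeal (d₁ + d₂ + d₃) 3 (wt123 d₁ d₂ d₃)) = (a : _) * (b : _)) :
    Module.finrank ℝ (LinearMap.range m) =
      Nat.choose d₁ 3 + 2 * Nat.choose d₁ 2 + d₁ + d₁ * d₂ ∧
    Nat.choose d₁ 3 + 2 * Nat.choose d₁ 2 + d₁ + d₁ * d₂ =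
      Nat.choose (d₁ + 2) 3 + d₁ * d₂ := by
  have harith : Nat.choose d₁ 3 + 2 * Nat.choose d₁ 2 + d₁ + d₁ * d₂ =
      Nat.choose (d₁ + 2) 3 + d₁ * d₂ := by rw [← choose_arith d₁]
  refine ⟨?_, harith⟩
  rw [← Submodule.finrank_map_subtype_eq (freeWeil3Component d₁ d₂ d₃ 3) (LinearMap.range m)]
  have h2 : Submodule.map (freeWeil3Component d₁ d₂ d₃ 3).subtype (LinearMap.range m)
      = Submodule.map (mkL d₁ d₂ d₃) (Submodule.span ℝ (prodSet d₁ d₂ d₃)) := by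
    rw [← LinearMap.range_comp, LinearMap.range_eq_map, ← span_tmul_eq_top ℝ,
      Submodule.map_span, Submodule.map_span]
    congr 1
    ext x
    constructor
    · rintro ⟨t, ⟨a, b, rfl⟩, rfl⟩
      obtain ⟨p, hp, hpa⟩ := a.2
      obtain ⟨q, hq, hqb⟩ := b.2
      refine ⟨p * q, ⟨p, hp, q, hq, rfl⟩, ?_⟩
      simp only [LinearMap.coe_comp, Function.comp_apply, Submodule.coe_subtype]
      rw [hm a b, ← hpa, ← hqb]
      simp only [_root_.mkL, AlgHom.toLinearMap_apply, map_mul]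
    · rintro ⟨x, ⟨p, hp, q, hq, rfl⟩, rfl⟩
      refine ⟨(⟨mkL d₁ d₂ d₃ p, p, hp, rfl⟩ : freeWeil3Component d₁ d₂ d₃ 1) ⊗ₜ[ℝ]
        (⟨mkL d₁ d₂ d₃ q, q, hq, rfl⟩ : freeWeil3Component d₁ d₂ d₃ 2), ⟨_, _, rfl⟩, ?_⟩
      simp only [LinearMap.coe_comp, Function.comp_apply, Submodule.coe_subtype]
      rw [hm]
      exact (mkL_mul d₁ d₂ d₃ p q).symm
  rw [h2]
  have h3 : Submodule.map (mkL d₁ d₂ d₃) (Submodule.span ℝ (prodSet d₁ d₂ d₃))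
      = LinearMap.range ((mkL d₁ d₂ d₃) ∘ₗ (Submodule.span ℝ (prodSet d₁ d₂ d₃)).subtype) := by
    rw [LinearMap.range_comp, Submodule.range_subtype]
  rw [h3, LinearMap.finrank_range_of_inj (mkL_injOn d₁ d₂ d₃), finrank_span_prodSet, harith]
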